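/- Let λ₁λ₂ > 0, Q(u) = (λ₁u₁² + λ₂u₂²)/2, X(u) = (u₁,u₂,Q(u)), let U ⊂ ℝ² be a bounded open set and U₀ ⊂ U a compact set. Set S_{Q,0} = X(U₀) and μ_Q = χ·H²⌊S_Q with S_Q = X(U), where χ : ℝ³ → [0,∞) is bounded and supported in S_{Q,0}. Fix C₁ ≥ 1 and L ≥ 1. Then there exist ρ₀ ∈ (0,1], σ₀ ∈ (0,1], and C ≥ 1, depending only on λ₁, λ₂, U₀, ‖χ‖_∞, C₁, and L, such that for every 0 < ρ ≤ ρ₀, every unit vector v ∈ ℝ³ that is relevant (i.e., there exists u ∈ U₀ with n_Q(u)·v = 0), every tube T of direction v, radius C₁ρ, and length parameter L, and every σ with ρ ≤ σ ≤ σ₀, one has μ_Q(E_v^ext ∩ N_σ(T)) ≤ C ρ^{1/2} σ, where E_v^ext := {X(u) : u ∈ U₀, |n_Q(u)·v| ≤ ρ^{1/2}} and N_σ(T) := {x ∈ ℝ³ : dist(x,T) ≤ σ}. -/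

import Mathlib

set_option maxHeartbeats 2000000

noncomputable section
open MeasureTheory Metric Set Function
open scoped ENNReal RealInnerProductSpace

abbrev E3 : Type := EuclideanSpace ℝ (Fin 3)
abbrev E2 : Type := EuclideanSpace ℝ (Fin 2)

def mk3 (a b c : ℝ) : E3 := (WithLp.equiv 2 (Fin 3 → ℝ)).symm ![a, b, c]

/-- Quadratic graph parametrization `X(u) = (u₁, u₂, (l₁u₁² + l₂u₂²)/2)`. -/
def Xf (l₁ l₂ : ℝ) (u : E2) : E3 := mk3 (u 0) (u 1) ((l₁ * (u 0) ^ 2 + l₂ * (u 1) ^ 2) / 2)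

/-- Unit normal of the quadratic graph at `X(u)`. -/
def nQ (l₁ l₂ : ℝ) (u : E2) : E3 :=
  (Real.sqrt (1 + l₁ ^ 2 * (u 0) ^ 2 + l₂ ^ 2 * (u 1) ^ 2))⁻¹ •
    mk3 (-(l₁ * u 0)) (-(l₂ * u 1)) 1

/-- The tube `T(v, y₀, s₀, r, L)`. -/
def tube (v y₀ : E3) (s₀ r L : ℝ) : Set E3 :=
  {x | ‖x - ⟪x, v⟫ • v - y₀‖ ≤ r ∧ |⟪x, v⟫ - s₀| ≤ L}

/-- The surface measure `μ_Q = χ·H²⌊S_Q` of the quadratic patch `S_Q = X(U)`. -/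
def muQ (l₁ l₂ : ℝ) (U : Set E2) (χ : E3 → ℝ) : Measure E3 :=
  ((μH[2] : Measure E3).restrict (Xf l₁ l₂ '' U)).withDensity fun x => ENNReal.ofReal (χ x)

lemma inner3 (x y : E3) : ⟪x, y⟫ = x 0 * y 0 + x 1 * y 1 + x 2 * y 2 := by
  simp [PiLp.inner_apply, Fin.sum_univ_three, RCLike.inner_apply, conj_trivial]; ring

lemma strip_vol (a0 a1 b0 b1 c₁ c₂ r₁ r₂ : ℝ) (h1 : 0 ≤ r₁) (h2 : 0 ≤ r₂)
    (hd : a0 * b1 - a1 * b0 ≠ 0) :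
    volume {x : Fin 2 → ℝ | |a0 * x 0 + a1 * x 1 - c₁| ≤ r₁ ∧ |b0 * x 0 + b1 * x 1 - c₂| ≤ r₂}
      ≤ ENNReal.ofReal (4 * r₁ * r₂ / |a0 * b1 - a1 * b0|) := by
  set M : (Fin 2 → ℝ) →ₗ[ℝ] (Fin 2 → ℝ) := Matrix.toLin' !![a0, a1; b0, b1] with hM
  have hdet : LinearMap.det M = a0 * b1 - a1 * b0 := by
    rw [hM, LinearMap.det_toLin']; simp [Matrix.det_fin_two]
  have hdet' : LinearMap.det M ≠ 0 := by rw [hdet]; exact hd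
  have hset : {x : Fin 2 → ℝ | |a0 * x 0 + a1 * x 1 - c₁| ≤ r₁ ∧ |b0 * x 0 + b1 * x 1 - c₂| ≤ r₂}
      = M ⁻¹' (Set.univ.pi ![Set.Icc (c₁ - r₁) (c₁ + r₁), Set.Icc (c₂ - r₂) (c₂ + r₂)]) := by
    ext x
    simp [hM, Matrix.toLin'_apply, Matrix.mulVec, dotProduct, Fin.sum_univ_two,
      Fin.forall_fin_two, Set.mem_Icc, abs_le]
    constructor
    · rintro ⟨⟨h1, h2⟩, h3, h4⟩; constructor <;> constructor <;> linarith
    · rintro ⟨⟨h1, h2⟩, h3, h4⟩; constructor <;> constructor <;> linarith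
  rw [hset, MeasureTheory.Measure.addHaar_preimage_linearMap volume hdet']
  rw [MeasureTheory.volume_pi_pi]
  simp only [Fin.prod_univ_two, Matrix.cons_val_zero, Matrix.cons_val_one, Matrix.head_cons,
    Real.volume_Icc]
  have e1 : (c₁ + r₁ - (c₁ - r₁)) = 2 * r₁ := by ring
  have e2 : (c₂ + r₂ - (c₂ - r₂)) = 2 * r₂ := by ring
  rw [e1, e2, hdet, ← ENNReal.ofReal_mul (by positivity), ← ENNReal.ofReal_mul (by positivity)]
  apply ENNReal.ofReal_le_ofReal
  rw [abs_inv, div_eq_mul_inv]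
  apply le_of_eq; ring

/-- elliptic tubular sublevel estimate
`μ_Q(E_v^ext ∩ N_σ(T)) ≤ C ρ^{1/2} σ`. -/
theorem elliptic_tubular_sublevel (l₁ l₂ Mχ C₁ L : ℝ) (hl : 0 < l₁ * l₂)
    (hMχ : 0 ≤ Mχ) (hC₁ : 1 ≤ C₁) (hL : 1 ≤ L)
    (U₀ : Set E2) (hU₀ : IsCompact U₀) :
    ∃ ρ₀ ∈ Set.Ioc (0 : ℝ) 1, ∃ σ₀ ∈ Set.Ioc (0 : ℝ) 1, ∃ C : ℝ, 1 ≤ C ∧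
      ∀ U : Set E2, IsOpen U → Bornology.IsBounded U → U₀ ⊆ U →
      ∀ χ : E3 → ℝ, (∀ x, 0 ≤ χ x) → (∀ x, χ x ≤ Mχ) →
        Function.support χ ⊆ Xf l₁ l₂ '' U₀ →
        ∀ ρ : ℝ, 0 < ρ → ρ ≤ ρ₀ →
        ∀ v : E3, ‖v‖ = 1 → (∃ u ∈ U₀, ⟪nQ l₁ l₂ u, v⟫ = 0) →
        ∀ y₀ : E3, ⟪y₀, v⟫ = 0 → ∀ s₀ : ℝ,
        ∀ σ : ℝ, ρ ≤ σ → σ ≤ σ₀ →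
          muQ l₁ l₂ U χ
              (Xf l₁ l₂ '' {u : E2 | u ∈ U₀ ∧ |⟪nQ l₁ l₂ u, v⟫| ≤ Real.sqrt ρ} ∩
                {x : E3 | infDist x (tube v y₀ s₀ (C₁ * ρ) L) ≤ σ}) ≤
            ENNReal.ofReal (C * Real.sqrt ρ * σ) := by
  -- bound on `U₀`
  obtain ⟨R₀, hR₀⟩ := hU₀.isBounded.subset_closedBall 0
  set R : ℝ := max R₀ 0 with hRdef
  have hR0 : 0 ≤ R := le_max_right _ _
  have hRmem : ∀ u ∈ U₀, |u 0| ≤ R ∧ |u 1| ≤ R := by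
    intro u hu
    have hn : ‖u‖ ≤ R := le_trans (by simpa using hR₀ hu) (le_max_left _ _)
    have hnorm : ‖u‖ = Real.sqrt ((u 0) ^ 2 + (u 1) ^ 2) := by
      rw [EuclideanSpace.norm_eq]; simp [Fin.sum_univ_two, sq_abs]
    constructor
    · have h' : |u 0| = Real.sqrt ((u 0) ^ 2) := (Real.sqrt_sq_eq_abs _).symm
      rw [h']
      refine le_trans (Real.sqrt_le_sqrt (show (u 0)^2 ≤ (u 0)^2 + (u 1)^2 by nlinarith [sq_nonneg (u 1)])) ?_
      rw [← hnorm]; exact hn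
    · have h' : |u 1| = Real.sqrt ((u 1) ^ 2) := (Real.sqrt_sq_eq_abs _).symm
      rw [h']
      refine le_trans (Real.sqrt_le_sqrt (show (u 1)^2 ≤ (u 0)^2 + (u 1)^2 by nlinarith [sq_nonneg (u 0)])) ?_
      rw [← hnorm]; exact hn
  have hl₁ : l₁ ≠ 0 := fun h => by simp [h] at hl
  have hl₂ : l₂ ≠ 0 := fun h => by simp [h] at hl
  set Λ : ℝ := max |l₁| |l₂| with hΛdef
  set lm : ℝ := min |l₁| |l₂| with hlmdef
  have hΛ0 : 0 < Λ := lt_max_of_lt_left (abs_pos.mpr hl₁)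
  have hlm0 : 0 < lm := lt_min (abs_pos.mpr hl₁) (abs_pos.mpr hl₂)
  set Nm : ℝ := Real.sqrt (1 + 2 * Λ ^ 2 * R ^ 2) with hNmdef
  have hNm1 : 1 ≤ Nm := by
    nlinarith [Real.sq_sqrt (show (0:ℝ) ≤ 1 + 2 * Λ ^ 2 * R ^ 2 by positivity),
      Real.sqrt_nonneg (1 + 2 * Λ ^ 2 * R ^ 2)]
  set K2 : ℝ := 2 + 4 * Λ ^ 2 * R ^ 2 with hK2def
  have hK2pos : 0 < K2 := by positivity
  set c0sq : ℝ := 1 / (1 + 2 * Λ ^ 2 * R ^ 2) with hc0def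
  have hc0pos : 0 < c0sq := by positivity
  set d₀ : ℝ := lm * c0sq with hd₀def
  have hd₀pos : 0 < d₀ := by positivity
  set C : ℝ := max 1 (Mχ * K2 * (4 * Nm * (C₁ + 2) / d₀)) with hCdef
  refine ⟨1, by norm_num, 1, by norm_num, C, le_max_left _ _, ?_⟩
  intro U hUopen hUbdd hU₀U χ hχ0 hχM hχsupp ρ hρ hρ1 v hv hrel y₀ hy₀ s₀ σ hρσ hσ1
  have hσ : 0 < σ := lt_of_lt_of_le hρ hρσ
  have hsρ : 0 < Real.sqrt ρ := Real.sqrt_pos.mpr hρ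
  -- coordinates of v
  have hvsum : v 0 ^ 2 + v 1 ^ 2 + v 2 ^ 2 = 1 := by
    have hv' := hv
    rw [EuclideanSpace.norm_eq] at hv'
    simp only [Fin.sum_univ_three, sq_abs, Real.norm_eq_abs] at hv'
    have h0 : (0:ℝ) ≤ v 0 ^ 2 + v 1 ^ 2 + v 2 ^ 2 := by positivity
    have h1 := Real.sq_sqrt h0
    rw [hv'] at h1
    simpa using h1.symm
  -- inner product with the normal
  have hinner : ∀ u : E2, ⟪nQ l₁ l₂ u, v⟫ =
      (Real.sqrt (1 + l₁ ^ 2 * (u 0) ^ 2 + l₂ ^ 2 * (u 1) ^ 2))⁻¹ *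
        (v 2 - (l₁ * v 0 * u 0 + l₂ * v 1 * u 1)) := by
    intro u
    rw [nQ, real_inner_smul_left, inner3]
    have e0 : (mk3 (-(l₁ * u 0)) (-(l₂ * u 1)) 1) 0 = -(l₁ * u 0) := rfl
    have e1 : (mk3 (-(l₁ * u 0)) (-(l₂ * u 1)) 1) 1 = -(l₂ * u 1) := rfl
    have e2 : (mk3 (-(l₁ * u 0)) (-(l₂ * u 1)) 1) 2 = 1 := rfl
    rw [e0, e1, e2]; ring
  obtain ⟨us, hus, hnus⟩ := hrel
  have hrel' : v 2 = l₁ * v 0 * us 0 + l₂ * v 1 * us 1 := by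
    rw [hinner us] at hnus
    have hNpos : 0 < Real.sqrt (1 + l₁ ^ 2 * (us 0) ^ 2 + l₂ ^ 2 * (us 1) ^ 2) :=
      Real.sqrt_pos.mpr (by positivity)
    rcases mul_eq_zero.mp hnus with h | h
    · exact absurd h (by positivity)
    · linarith only [h]
  have hΛl₁ : |l₁| ≤ Λ := le_max_left _ _
  have hΛl₂ : |l₂| ≤ Λ := le_max_right _ _
  have hv2sq : v 2 ^ 2 ≤ 2 * Λ ^ 2 * R ^ 2 * (v 0 ^ 2 + v 1 ^ 2) := by
    obtain ⟨hu0, hu1⟩ := hRmem us hus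
    have ha : (l₁ * us 0) ^ 2 ≤ Λ ^ 2 * R ^ 2 := by
      have h1 : |l₁ * us 0| ≤ Λ * R := by
        rw [abs_mul]; exact mul_le_mul hΛl₁ hu0 (abs_nonneg _) (le_of_lt hΛ0)
      calc (l₁ * us 0) ^ 2 = |l₁ * us 0| ^ 2 := (sq_abs _).symm
        _ ≤ (Λ * R) ^ 2 := pow_le_pow_left₀ (abs_nonneg _) h1 2
        _ = Λ ^ 2 * R ^ 2 := by ring
    have hb : (l₂ * us 1) ^ 2 ≤ Λ ^ 2 * R ^ 2 := by
      have h1 : |l₂ * us 1| ≤ Λ * R := by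
        rw [abs_mul]; exact mul_le_mul hΛl₂ hu1 (abs_nonneg _) (le_of_lt hΛ0)
      calc (l₂ * us 1) ^ 2 = |l₂ * us 1| ^ 2 := (sq_abs _).symm
        _ ≤ (Λ * R) ^ 2 := pow_le_pow_left₀ (abs_nonneg _) h1 2
        _ = Λ ^ 2 * R ^ 2 := by ring
    have hexp : v 2 = (l₁ * us 0) * v 0 + (l₂ * us 1) * v 1 := by rw [hrel']; ring
    have key : v 2 ^ 2 ≤ 2 * ((l₁ * us 0) ^ 2 * v 0 ^ 2 + (l₂ * us 1) ^ 2 * v 1 ^ 2) := by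
      rw [hexp]; nlinarith only [sq_nonneg ((l₁ * us 0) * v 0 - (l₂ * us 1) * v 1)]
    have k1 : (l₁ * us 0) ^ 2 * v 0 ^ 2 ≤ Λ ^ 2 * R ^ 2 * v 0 ^ 2 :=
      mul_le_mul_of_nonneg_right ha (sq_nonneg _)
    have k2 : (l₂ * us 1) ^ 2 * v 1 ^ 2 ≤ Λ ^ 2 * R ^ 2 * v 1 ^ 2 :=
      mul_le_mul_of_nonneg_right hb (sq_nonneg _)
    linarith only [key, k1, k2]
  have hhsq : c0sq ≤ v 0 ^ 2 + v 1 ^ 2 := by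
    rw [hc0def, div_le_iff₀ (by positivity)]
    linarith only [hv2sq, hvsum]
  -- determinant lower bound
  have habs : d₀ ≤ |l₁ * v 0 ^ 2 + l₂ * v 1 ^ 2| := by
    rw [hd₀def]
    have hll : (0 < l₁ ∧ 0 < l₂) ∨ (l₁ < 0 ∧ l₂ < 0) := mul_pos_iff.mp hl
    rcases hll with ⟨h1, h2⟩ | ⟨h1, h2⟩
    · rw [abs_of_nonneg (by nlinarith only [sq_nonneg (v 0), sq_nonneg (v 1), h1, h2])]
      have e1 : lm ≤ l₁ := le_trans (min_le_left _ _) (le_of_eq (abs_of_pos h1))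
      have e2 : lm ≤ l₂ := le_trans (min_le_right _ _) (le_of_eq (abs_of_pos h2))
      have : lm * c0sq ≤ lm * (v 0 ^ 2 + v 1 ^ 2) :=
        mul_le_mul_of_nonneg_left hhsq (le_of_lt hlm0)
      nlinarith only [sq_nonneg (v 0), sq_nonneg (v 1), e1, e2, this]
    · rw [abs_of_nonpos (by nlinarith only [sq_nonneg (v 0), sq_nonneg (v 1), h1, h2])]
      have e1 : lm ≤ -l₁ := le_trans (min_le_left _ _) (le_of_eq (abs_of_neg h1))
      have e2 : lm ≤ -l₂ := le_trans (min_le_right _ _) (le_of_eq (abs_of_neg h2))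
      have : lm * c0sq ≤ lm * (v 0 ^ 2 + v 1 ^ 2) :=
        mul_le_mul_of_nonneg_left hhsq (le_of_lt hlm0)
      nlinarith only [sq_nonneg (v 0), sq_nonneg (v 1), e1, e2, this]
  have hdetne : l₁ * v 0 ^ 2 + l₂ * v 1 ^ 2 ≠ 0 := by
    intro h; rw [h, abs_zero] at habs; linarith only [habs, hd₀pos]
  -- the second strip data
  set W : E3 := mk3 (-(v 1)) (v 0) 0 with hWdef
  have hW0 : W 0 = -(v 1) := rfl
  have hW1 : W 1 = v 0 := rfl
  have hW2 : W 2 = 0 := rfl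
  set c₂ : ℝ := ⟪y₀, W⟫ with hc₂def
  set r₁ : ℝ := Nm * Real.sqrt ρ with hr₁def
  set r₂ : ℝ := (C₁ + 2) * σ with hr₂def
  have hr₁0 : 0 ≤ r₁ := by positivity
  have hr₂0 : 0 ≤ r₂ := by positivity
  set A'' : Set E2 := {u : E2 | |l₁ * v 0 * u 0 + l₂ * v 1 * u 1 - v 2| ≤ r₁ ∧
      |(-(v 1)) * u 0 + v 0 * u 1 - c₂| ≤ r₂ ∧ |u 0| ≤ R ∧ |u 1| ≤ R} with hA''def
  -- tube nonempty
  have htube_ne : (tube v y₀ s₀ (C₁ * ρ) L).Nonempty := by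
    refine ⟨y₀ + s₀ • v, ?_, ?_⟩
    · have hinn : ⟪y₀ + s₀ • v, v⟫ = s₀ := by
        rw [inner_add_left, real_inner_smul_left, hy₀, real_inner_self_eq_norm_sq, hv]
        ring
      rw [hinn]
      have : y₀ + s₀ • v - s₀ • v - y₀ = 0 := by abel
      rw [this, norm_zero]
      exact le_of_lt (mul_pos (lt_of_lt_of_le one_pos hC₁) hρ)
    · have hinn : ⟪y₀ + s₀ • v, v⟫ = s₀ := by
        rw [inner_add_left, real_inner_smul_left, hy₀, real_inner_self_eq_norm_sq, hv]
        ring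
      rw [hinn, sub_self, abs_zero]; linarith only [hL]
  have hWnorm : ‖W‖ ≤ 1 := by
    rw [EuclideanSpace.norm_eq]
    simp only [Fin.sum_univ_three, hW0, hW1, hW2, Real.norm_eq_abs, sq_abs]
    rw [show (-(v 1)) ^ 2 + (v 0) ^ 2 + (0:ℝ) ^ 2 = v 0 ^ 2 + v 1 ^ 2 by ring]
    refine Real.sqrt_le_one.mpr ?_
    linarith only [sq_nonneg (v 2), hvsum]
  have hvW : ⟪v, W⟫ = 0 := by rw [inner3, hW0, hW1, hW2]; ring
  -- containment of the target set
  have hsub : (Xf l₁ l₂ '' {u : E2 | u ∈ U₀ ∧ |⟪nQ l₁ l₂ u, v⟫| ≤ Real.sqrt ρ} ∩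
      {x : E3 | infDist x (tube v y₀ s₀ (C₁ * ρ) L) ≤ σ}) ⊆ Xf l₁ l₂ '' A'' := by
    rintro x ⟨⟨u, ⟨huU₀, hun⟩, rfl⟩, hxdist⟩
    obtain ⟨hu0R, hu1R⟩ := hRmem u huU₀
    refine ⟨u, ⟨?_, ?_, hu0R, hu1R⟩, rfl⟩
    · -- first strip
      set Nu : ℝ := Real.sqrt (1 + l₁ ^ 2 * (u 0) ^ 2 + l₂ ^ 2 * (u 1) ^ 2) with hNudef
      have hNupos : 0 < Nu := Real.sqrt_pos.mpr (by positivity)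
      have hNuNm : Nu ≤ Nm := by
        refine Real.sqrt_le_sqrt ?_
        have e1 : l₁ ^ 2 * (u 0) ^ 2 ≤ Λ ^ 2 * R ^ 2 := by
          have h1 : |l₁ * u 0| ≤ Λ * R := by
            rw [abs_mul]; exact mul_le_mul hΛl₁ hu0R (abs_nonneg _) (le_of_lt hΛ0)
          calc l₁ ^ 2 * (u 0) ^ 2 = |l₁ * u 0| ^ 2 := by rw [sq_abs]; ring
            _ ≤ (Λ * R) ^ 2 := pow_le_pow_left₀ (abs_nonneg _) h1 2
            _ = Λ ^ 2 * R ^ 2 := by ring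
        have e2 : l₂ ^ 2 * (u 1) ^ 2 ≤ Λ ^ 2 * R ^ 2 := by
          have h1 : |l₂ * u 1| ≤ Λ * R := by
            rw [abs_mul]; exact mul_le_mul hΛl₂ hu1R (abs_nonneg _) (le_of_lt hΛ0)
          calc l₂ ^ 2 * (u 1) ^ 2 = |l₂ * u 1| ^ 2 := by rw [sq_abs]; ring
            _ ≤ (Λ * R) ^ 2 := pow_le_pow_left₀ (abs_nonneg _) h1 2
            _ = Λ ^ 2 * R ^ 2 := by ring
        linarith only [e1, e2]
      rw [hinner u, ← hNudef] at hun
      rw [abs_mul, abs_inv, abs_of_pos hNupos] at hun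
      have h' : |v 2 - (l₁ * v 0 * u 0 + l₂ * v 1 * u 1)| ≤ Nu * Real.sqrt ρ := by
        have := mul_le_mul_of_nonneg_left hun (le_of_lt hNupos)
        calc |v 2 - (l₁ * v 0 * u 0 + l₂ * v 1 * u 1)|
            = Nu * (Nu⁻¹ * |v 2 - (l₁ * v 0 * u 0 + l₂ * v 1 * u 1)|) := by
              field_simp
          _ ≤ Nu * Real.sqrt ρ := this
      rw [abs_sub_comm]
      calc |v 2 - (l₁ * v 0 * u 0 + l₂ * v 1 * u 1)| ≤ Nu * Real.sqrt ρ := h'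
        _ ≤ Nm * Real.sqrt ρ := mul_le_mul_of_nonneg_right hNuNm (Real.sqrt_nonneg _)
    · -- second strip
      obtain ⟨x', hx'T, hx'd⟩ := (infDist_lt_iff htube_ne).mp
        (lt_of_le_of_lt hxdist (by linarith only [hσ] : σ < 2 * σ))
      have hXW : ⟪Xf l₁ l₂ u, W⟫ = (-(v 1)) * u 0 + v 0 * u 1 := by
        rw [inner3, hW0, hW1, hW2]
        have e0 : (Xf l₁ l₂ u) 0 = u 0 := rfl
        have e1 : (Xf l₁ l₂ u) 1 = u 1 := rfl
        rw [e0, e1]; ring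
      have edecomp : ⟪Xf l₁ l₂ u, W⟫ - ⟪y₀, W⟫ =
          ⟪Xf l₁ l₂ u - x', W⟫ + ⟪x' - ⟪x', v⟫ • v - y₀, W⟫ + ⟪x', v⟫ * ⟪v, W⟫ := by
        rw [inner_sub_left, inner_sub_left, inner_sub_left, real_inner_smul_left]; ring
      have hterm1 : |⟪Xf l₁ l₂ u - x', W⟫| ≤ 2 * σ := by
        refine le_trans (abs_real_inner_le_norm _ _) ?_
        have h1 : ‖Xf l₁ l₂ u - x'‖ ≤ 2 * σ := by
          rw [← dist_eq_norm]; exact le_of_lt hx'd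
        calc ‖Xf l₁ l₂ u - x'‖ * ‖W‖ ≤ ‖Xf l₁ l₂ u - x'‖ * 1 :=
              mul_le_mul_of_nonneg_left hWnorm (norm_nonneg _)
          _ = ‖Xf l₁ l₂ u - x'‖ := mul_one _
          _ ≤ 2 * σ := h1
      have hterm2 : |⟪x' - ⟪x', v⟫ • v - y₀, W⟫| ≤ C₁ * ρ := by
        refine le_trans (abs_real_inner_le_norm _ _) ?_
        have h1 : ‖x' - ⟪x', v⟫ • v - y₀‖ ≤ C₁ * ρ := hx'T.1
        calc ‖x' - ⟪x', v⟫ • v - y₀‖ * ‖W‖ ≤ ‖x' - ⟪x', v⟫ • v - y₀‖ * 1 :=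
              mul_le_mul_of_nonneg_left hWnorm (norm_nonneg _)
          _ = ‖x' - ⟪x', v⟫ • v - y₀‖ := mul_one _
          _ ≤ C₁ * ρ := h1
      have : |⟪Xf l₁ l₂ u, W⟫ - ⟪y₀, W⟫| ≤ 2 * σ + C₁ * ρ := by
        rw [edecomp, hvW, mul_zero, add_zero]
        exact le_trans (abs_add_le _ _) (add_le_add hterm1 hterm2)
      rw [hXW] at this
      have hC₁ρσ : C₁ * ρ ≤ C₁ * σ :=
        mul_le_mul_of_nonneg_left hρσ (by linarith only [hC₁])
      calc |(-(v 1)) * u 0 + v 0 * u 1 - c₂| ≤ 2 * σ + C₁ * ρ := this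
        _ ≤ (C₁ + 2) * σ := by linarith only [hC₁ρσ]
  -- continuity of coordinates and of `Xf`
  have hcont0 : Continuous fun u : E2 => u 0 :=
    (continuous_apply (0 : Fin 2)).comp (PiLp.continuous_ofLp 2 (fun _ : Fin 2 => ℝ))
  have hcont1 : Continuous fun u : E2 => u 1 :=
    (continuous_apply (1 : Fin 2)).comp (PiLp.continuous_ofLp 2 (fun _ : Fin 2 => ℝ))
  have hXcont : Continuous (Xf l₁ l₂) := by
    refine Continuous.comp (PiLp.continuous_toLp 2 (fun _ : Fin 3 => ℝ)) ?_
    refine continuous_pi ?_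
    intro i
    fin_cases i
    · simpa using hcont0
    · simpa using hcont1
    · show Continuous fun u : E2 => (l₁ * (u 0) ^ 2 + l₂ * (u 1) ^ 2) / 2
      exact ((continuous_const.mul (hcont0.pow 2)).add (continuous_const.mul (hcont1.pow 2))).div_const 2
  -- compactness of A''
  have hA''closed : IsClosed A'' := by
    have hf1 : Continuous fun u : E2 => l₁ * v 0 * u 0 + l₂ * v 1 * u 1 - v 2 :=
      ((continuous_const.mul hcont0).add (continuous_const.mul hcont1)).sub continuous_const
    have hf2 : Continuous fun u : E2 => (-(v 1)) * u 0 + v 0 * u 1 - c₂ :=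
      ((continuous_const.mul hcont0).add (continuous_const.mul hcont1)).sub continuous_const
    have hc1 : IsClosed {u : E2 | |l₁ * v 0 * u 0 + l₂ * v 1 * u 1 - v 2| ≤ r₁} :=
      isClosed_le hf1.abs continuous_const
    have hc2 : IsClosed {u : E2 | |(-(v 1)) * u 0 + v 0 * u 1 - c₂| ≤ r₂} :=
      isClosed_le hf2.abs continuous_const
    have hc3 : IsClosed {u : E2 | |u 0| ≤ R} :=
      isClosed_le (Continuous.abs hcont0) continuous_const
    have hc4 : IsClosed {u : E2 | |u 1| ≤ R} :=
      isClosed_le (Continuous.abs hcont1) continuous_const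
    have : A'' = {u : E2 | |l₁ * v 0 * u 0 + l₂ * v 1 * u 1 - v 2| ≤ r₁} ∩
        ({u : E2 | |(-(v 1)) * u 0 + v 0 * u 1 - c₂| ≤ r₂} ∩
          ({u : E2 | |u 0| ≤ R} ∩ {u : E2 | |u 1| ≤ R})) := by
      rfl
    rw [this]
    exact hc1.inter (hc2.inter (hc3.inter hc4))
  have hA''bdd : Bornology.IsBounded A'' := by
    refine (Metric.isBounded_closedBall (x := (0 : E2)) (r := 2 * R + 1)).subset ?_
    intro u hu
    rw [Metric.mem_closedBall, dist_zero_right, EuclideanSpace.norm_eq]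
    simp only [Fin.sum_univ_two, Real.norm_eq_abs, sq_abs]
    have q0 : (u 0) ^ 2 ≤ R ^ 2 := by
      calc (u 0) ^ 2 = |u 0| ^ 2 := (sq_abs _).symm
        _ ≤ R ^ 2 := pow_le_pow_left₀ (abs_nonneg _) hu.2.2.1 2
    have q1 : (u 1) ^ 2 ≤ R ^ 2 := by
      calc (u 1) ^ 2 = |u 1| ^ 2 := (sq_abs _).symm
        _ ≤ R ^ 2 := pow_le_pow_left₀ (abs_nonneg _) hu.2.2.2 2
    refine le_trans (Real.sqrt_le_sqrt (show (u 0) ^ 2 + (u 1) ^ 2 ≤ (2 * R + 1) ^ 2 by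
      linarith only [q0, q1, hR0, sq_nonneg R])) ?_
    rw [Real.sqrt_sq (by positivity)]
  have hA''cpt : IsCompact A'' := Metric.isCompact_of_isClosed_isBounded hA''closed hA''bdd
  have hS''cpt : IsCompact (Xf l₁ l₂ '' A'') := hA''cpt.image hXcont
  have hS''meas : MeasurableSet (Xf l₁ l₂ '' A'') := hS''cpt.isClosed.measurableSet
  -- Hausdorff measure bound via Lipschitz image
  set F : (Fin 2 → ℝ) → E3 := fun x =>
    Xf l₁ l₂ ((WithLp.equiv 2 (Fin 2 → ℝ)).symm x) with hFdef
  set B : Set (Fin 2 → ℝ) := {x : Fin 2 → ℝ | |l₁ * v 0 * x 0 + l₂ * v 1 * x 1 - v 2| ≤ r₁ ∧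
      |(-(v 1)) * x 0 + v 0 * x 1 - c₂| ≤ r₂ ∧ |x 0| ≤ R ∧ |x 1| ≤ R} with hBdef
  have hAB : A'' = (WithLp.equiv 2 (Fin 2 → ℝ)).symm '' B := by
    ext u
    constructor
    · intro hu
      exact ⟨(WithLp.equiv 2 (Fin 2 → ℝ)) u, hu, (WithLp.equiv 2 (Fin 2 → ℝ)).symm_apply_apply u⟩
    · rintro ⟨x, hx, rfl⟩
      exact hx
  have himg : Xf l₁ l₂ '' A'' = F '' B := by
    rw [hAB]
    exact Set.image_image _ _ _
  set Knn : NNReal := Real.toNNReal (Real.sqrt K2) with hKnndef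
  have hKnncoe : (Knn : ℝ) = Real.sqrt K2 := Real.coe_toNNReal _ (Real.sqrt_nonneg _)
  have hlip : LipschitzOnWith Knn F B := by
    rw [lipschitzOnWith_iff_dist_le_mul]
    intro x hx y hy
    have hd0 : |x 0 - y 0| ≤ dist x y := by
      have := dist_le_pi_dist x y 0; rwa [Real.dist_eq] at this
    have hd1 : |x 1 - y 1| ≤ dist x y := by
      have := dist_le_pi_dist x y 1; rwa [Real.dist_eq] at this
    have hdist_nonneg : 0 ≤ dist x y := dist_nonneg
    have hdistF : dist (F x) (F y) = Real.sqrt ((x 0 - y 0) ^ 2 + (x 1 - y 1) ^ 2 +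
        ((l₁ * (x 0) ^ 2 + l₂ * (x 1) ^ 2) / 2 - (l₁ * (y 0) ^ 2 + l₂ * (y 1) ^ 2) / 2) ^ 2) := by
      rw [EuclideanSpace.dist_eq]
      simp only [Fin.sum_univ_three, Real.dist_eq, sq_abs]
      rfl
    rw [hdistF]
    -- bound the quadratic difference
    have hQbd : ((l₁ * (x 0) ^ 2 + l₂ * (x 1) ^ 2) / 2 -
        (l₁ * (y 0) ^ 2 + l₂ * (y 1) ^ 2) / 2) ^ 2 ≤ 4 * Λ ^ 2 * R ^ 2 * (dist x y) ^ 2 := by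
      have e : (l₁ * (x 0) ^ 2 + l₂ * (x 1) ^ 2) / 2 - (l₁ * (y 0) ^ 2 + l₂ * (y 1) ^ 2) / 2
          = l₁ * (x 0 + y 0) / 2 * (x 0 - y 0) + l₂ * (x 1 + y 1) / 2 * (x 1 - y 1) := by ring
      have ha : |l₁ * (x 0 + y 0) / 2| ≤ Λ * R := by
        rw [abs_div, abs_mul]
        have : |x 0 + y 0| ≤ 2 * R := le_trans (abs_add_le _ _) (by linarith [hx.2.2.1, hy.2.2.1])
        have hm : |l₁| * |x 0 + y 0| ≤ Λ * (2 * R) :=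
          mul_le_mul hΛl₁ this (abs_nonneg _) (le_of_lt hΛ0)
        calc |l₁| * |x 0 + y 0| / |(2:ℝ)| = |l₁| * |x 0 + y 0| / 2 := by norm_num
          _ ≤ Λ * (2 * R) / 2 := by linarith only [hm]
          _ = Λ * R := by ring
      have hb : |l₂ * (x 1 + y 1) / 2| ≤ Λ * R := by
        rw [abs_div, abs_mul]
        have : |x 1 + y 1| ≤ 2 * R := le_trans (abs_add_le _ _) (by linarith [hx.2.2.2, hy.2.2.2])
        have hm : |l₂| * |x 1 + y 1| ≤ Λ * (2 * R) :=
          mul_le_mul hΛl₂ this (abs_nonneg _) (le_of_lt hΛ0)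
        calc |l₂| * |x 1 + y 1| / |(2:ℝ)| = |l₂| * |x 1 + y 1| / 2 := by norm_num
          _ ≤ Λ * (2 * R) / 2 := by linarith only [hm]
          _ = Λ * R := by ring
      have habs1 : |l₁ * (x 0 + y 0) / 2 * (x 0 - y 0)| ≤ Λ * R * dist x y := by
        rw [abs_mul]
        exact mul_le_mul ha hd0 (abs_nonneg _) (by positivity)
      have habs2 : |l₂ * (x 1 + y 1) / 2 * (x 1 - y 1)| ≤ Λ * R * dist x y := by
        rw [abs_mul]
        exact mul_le_mul hb hd1 (abs_nonneg _) (by positivity)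
      rw [e]
      have h3 : |l₁ * (x 0 + y 0) / 2 * (x 0 - y 0) + l₂ * (x 1 + y 1) / 2 * (x 1 - y 1)|
          ≤ 2 * (Λ * R * dist x y) := le_trans (abs_add_le _ _) (by linarith only [habs1, habs2])
      calc (l₁ * (x 0 + y 0) / 2 * (x 0 - y 0) + l₂ * (x 1 + y 1) / 2 * (x 1 - y 1)) ^ 2
          = |l₁ * (x 0 + y 0) / 2 * (x 0 - y 0) + l₂ * (x 1 + y 1) / 2 * (x 1 - y 1)| ^ 2 :=
            (sq_abs _).symm
        _ ≤ (2 * (Λ * R * dist x y)) ^ 2 := pow_le_pow_left₀ (abs_nonneg _) h3 2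
        _ = 4 * Λ ^ 2 * R ^ 2 * dist x y ^ 2 := by ring
    have hinside : (x 0 - y 0) ^ 2 + (x 1 - y 1) ^ 2 +
        ((l₁ * (x 0) ^ 2 + l₂ * (x 1) ^ 2) / 2 - (l₁ * (y 0) ^ 2 + l₂ * (y 1) ^ 2) / 2) ^ 2
        ≤ K2 * (dist x y) ^ 2 := by
      have h1 : (x 0 - y 0) ^ 2 ≤ (dist x y) ^ 2 := by
        calc (x 0 - y 0) ^ 2 = |x 0 - y 0| ^ 2 := (sq_abs _).symm
          _ ≤ (dist x y) ^ 2 := pow_le_pow_left₀ (abs_nonneg _) hd0 2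
      have h2 : (x 1 - y 1) ^ 2 ≤ (dist x y) ^ 2 := by
        calc (x 1 - y 1) ^ 2 = |x 1 - y 1| ^ 2 := (sq_abs _).symm
          _ ≤ (dist x y) ^ 2 := pow_le_pow_left₀ (abs_nonneg _) hd1 2
      rw [hK2def]; linarith [hQbd]
    calc Real.sqrt ((x 0 - y 0) ^ 2 + (x 1 - y 1) ^ 2 +
        ((l₁ * (x 0) ^ 2 + l₂ * (x 1) ^ 2) / 2 - (l₁ * (y 0) ^ 2 + l₂ * (y 1) ^ 2) / 2) ^ 2)
        ≤ Real.sqrt (K2 * (dist x y) ^ 2) := Real.sqrt_le_sqrt hinside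
      _ = Real.sqrt K2 * dist x y := by
          rw [Real.sqrt_mul (le_of_lt hK2pos), Real.sqrt_sq hdist_nonneg]
      _ = (Knn : ℝ) * dist x y := by rw [hKnncoe]
  have hμHpi : (μH[2] : Measure (Fin 2 → ℝ)) = volume := by
    have := MeasureTheory.hausdorffMeasure_pi_real (ι := Fin 2)
    simpa using this
  have hKnn2 : ((Knn : ℝ≥0∞)) ^ (2 : ℝ) = ENNReal.ofReal K2 := by
    rw [show ((Knn : ℝ≥0∞)) ^ (2 : ℝ) = ((Knn : ℝ≥0∞)) ^ (2 : ℕ) by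
      rw [← ENNReal.rpow_natCast]; norm_num]
    rw [← ENNReal.coe_pow]
    have : Knn ^ 2 = Real.toNNReal K2 := by
      rw [hKnndef, ← Real.toNNReal_pow (Real.sqrt_nonneg _), Real.sq_sqrt (le_of_lt hK2pos)]
    rw [this]
    rfl
  have hBstrip : B ⊆ {x : Fin 2 → ℝ | |l₁ * v 0 * x 0 + l₂ * v 1 * x 1 - v 2| ≤ r₁ ∧
      |(-(v 1)) * x 0 + v 0 * x 1 - c₂| ≤ r₂} := fun x hx => ⟨hx.1, hx.2.1⟩
  have hdet_eq : (l₁ * v 0) * (v 0) - (l₂ * v 1) * (-(v 1)) = l₁ * v 0 ^ 2 + l₂ * v 1 ^ 2 := by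
    ring
  have hvolB : volume B ≤ ENNReal.ofReal (4 * r₁ * r₂ / d₀) := by
    refine le_trans (measure_mono hBstrip) ?_
    refine le_trans (strip_vol (l₁ * v 0) (l₂ * v 1) (-(v 1)) (v 0) (v 2) c₂ r₁ r₂ hr₁0 hr₂0
      (by rw [hdet_eq]; exact hdetne)) ?_
    apply ENNReal.ofReal_le_ofReal
    rw [hdet_eq]
    apply div_le_div_of_nonneg_left (by positivity) hd₀pos habs
  have hH : μH[2] (Xf l₁ l₂ '' A'') ≤ ENNReal.ofReal K2 * ENNReal.ofReal (4 * r₁ * r₂ / d₀) := by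
    rw [himg]
    refine le_trans (hlip.hausdorffMeasure_image_le (by norm_num) ) ?_
    rw [hKnn2, hμHpi]
    exact mul_le_mul_right hvolB _
  -- final measure chain
  refine le_trans (measure_mono hsub) ?_
  have e1 : muQ l₁ l₂ U χ (Xf l₁ l₂ '' A'') = ∫⁻ x in Xf l₁ l₂ '' A'', ENNReal.ofReal (χ x) ∂((μH[2] : Measure E3).restrict (Xf l₁ l₂ '' U)) := by
    rw [muQ, withDensity_apply _ hS''meas]
  rw [e1]
  refine le_trans (lintegral_mono fun x => ENNReal.ofReal_le_ofReal (hχM x)) ?_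
  rw [setLIntegral_const]
  refine le_trans (mul_le_mul_right (Measure.restrict_apply_le _ _) _) ?_
  refine le_trans (mul_le_mul_right hH _) ?_
  rw [← ENNReal.ofReal_mul (le_of_lt hK2pos), ← ENNReal.ofReal_mul hMχ]
  apply ENNReal.ofReal_le_ofReal
  have hcoef : Mχ * K2 * (4 * Nm * (C₁ + 2) / d₀) ≤ C := le_max_right _ _
  have hnn : (0:ℝ) ≤ Real.sqrt ρ * σ := mul_nonneg (Real.sqrt_nonneg _) (le_of_lt hσ)
  calc Mχ * (K2 * (4 * r₁ * r₂ / d₀)) = (Mχ * K2 * (4 * Nm * (C₁ + 2) / d₀)) * (Real.sqrt ρ * σ) := by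
        rw [hr₁def, hr₂def]; ring
    _ ≤ C * (Real.sqrt ρ * σ) := mul_le_mul_of_nonneg_right hcoef hnn
    _ = C * Real.sqrt ρ * σ := by ring
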